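/- Let G be a finite group and H a normal subgroup of G. Then H is a perfect code of G if and only if for all x ∈ G with x² ∈ H, there exists h ∈ H such that (xh)² = 1. -/
import Mathlib


/-- A subgroup `H` of a group `G` is a *perfect code* of `G` if `H` admits an
inverse-closed left transversal in `G`, i.e. there is a set `T ⊆ G` with
`T⁻¹ = T` such that every element of `G` lies in exactly one left coset `tH`, `t ∈ T`. -/
def IsPerfectCode {G : Type*} [Group G] (H : Subgroup G) : Prop :=
  ∃ T : Set G, T⁻¹ = T ∧ ∀ g : G, ∃! t : G, t ∈ T ∧ t⁻¹ * g ∈ H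

theorem perfectCode_iff_of_normal {G : Type*} [Group G] [Finite G] (H : Subgroup G)
    (hn : H.Normal) :
    IsPerfectCode H ↔ ∀ x : G, x ^ 2 ∈ H → ∃ h ∈ H, (x * h) ^ 2 = 1 := by
  classical
  haveI := hn
  constructor
  · rintro ⟨T, hTinv, hT⟩ x hx
    obtain ⟨t, ⟨htT, htx⟩, huniq⟩ := hT x
    have hmk : (t : G ⧸ H) = (x : G ⧸ H) := (QuotientGroup.eq).mpr htx
    have htx2 : t * x ∈ H := by
      rw [← QuotientGroup.eq_one_iff, QuotientGroup.mk_mul, hmk, ← QuotientGroup.mk_mul,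
        ← sq, QuotientGroup.eq_one_iff]
      exact hx
    have htinv : t⁻¹ ∈ T := by
      have : t⁻¹ ∈ T⁻¹ := Set.inv_mem_inv.mpr htT
      rwa [hTinv] at this
    have heq : t⁻¹ = t := huniq t⁻¹ ⟨htinv, by rwa [inv_inv]⟩
    refine ⟨x⁻¹ * t, ?_, ?_⟩
    · have h2 := H.inv_mem htx
      rwa [mul_inv_rev, inv_inv] at h2
    · have ht1 : t * t = 1 := by nth_rewrite 1 [← heq]; exact inv_mul_cancel t
      calc (x * (x⁻¹ * t)) ^ 2 = t ^ 2 := by rw [mul_inv_cancel_left]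
        _ = t * t := sq t
        _ = 1 := ht1
  · intro hcond
    have key : ∀ C : G ⧸ H, C⁻¹ = C → ∃ t : G, (t : G ⧸ H) = C ∧ t ^ 2 = 1 := by
      intro C hC
      have hx : (Quotient.out C) ^ 2 ∈ H := by
        rw [← QuotientGroup.eq_one_iff, QuotientGroup.mk_pow, QuotientGroup.out_eq', sq]
        calc C * C = C⁻¹ * C := by rw [hC]
          _ = 1 := inv_mul_cancel C
      obtain ⟨h, hh, hth⟩ := hcond _ hx
      refine ⟨Quotient.out C * h, ?_, hth⟩
      rw [QuotientGroup.mk_mul, QuotientGroup.out_eq',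
        (QuotientGroup.eq_one_iff h).mpr hh, mul_one]
    choose σ hσ hσ2 using key
    haveI : Fintype (G ⧸ H) := Fintype.ofFinite _
    let e := Fintype.equivFin (G ⧸ H)
    let f : G ⧸ H → G := fun C =>
      if hC : C⁻¹ = C then σ C hC
      else if e C < e C⁻¹ then Quotient.out C else (Quotient.out (C⁻¹ : G ⧸ H))⁻¹
    have fmem : ∀ C : G ⧸ H, (f C : G ⧸ H) = C := by
      intro C
      by_cases hC : C⁻¹ = C
      · simp only [f, dif_pos hC]; exact hσ C hC
      · simp only [f, dif_neg hC]
        by_cases hlt : e C < e C⁻¹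
        · rw [if_pos hlt]; exact QuotientGroup.out_eq' C
        · rw [if_neg hlt, QuotientGroup.mk_inv, QuotientGroup.out_eq', inv_inv]
    have finv : ∀ C : G ⧸ H, f C⁻¹ = (f C)⁻¹ := by
      intro C
      by_cases hC : C⁻¹ = C
      · rw [hC]
        simp only [f, dif_pos hC]
        have := hσ2 C hC
        rw [sq] at this
        exact (inv_eq_of_mul_eq_one_right this).symm
      · have hC' : (C⁻¹)⁻¹ ≠ C⁻¹ := by rw [inv_inv]; exact fun h => hC h.symm
        have hne : e C ≠ e C⁻¹ := fun h => hC (e.injective h).symm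
        simp only [f, dif_neg hC, dif_neg hC']
        rcases lt_or_gt_of_ne hne with hlt | hgt
        · have h2 : ¬ e C⁻¹ < e (C⁻¹)⁻¹ := by rw [inv_inv]; exact not_lt.mpr hlt.le
          rw [if_pos hlt, if_neg h2, inv_inv]
        · have h2 : e C⁻¹ < e (C⁻¹)⁻¹ := by rw [inv_inv]; exact hgt
          rw [if_neg (not_lt.mpr hgt.le), if_pos h2, inv_inv]
    refine ⟨Set.range f, ?_, ?_⟩
    · apply Set.Subset.antisymm
      · rintro t ⟨C, hCt⟩
        exact ⟨C⁻¹, by rw [finv, hCt, inv_inv]⟩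
      · rintro t ⟨C, hCt⟩
        exact Set.mem_inv.mpr ⟨C⁻¹, by rw [finv, hCt]⟩
    · intro g
      refine ⟨f (g : G ⧸ H), ⟨⟨_, rfl⟩, ?_⟩, ?_⟩
      · exact (QuotientGroup.eq).mp (fmem _)
      · rintro t' ⟨⟨C, rfl⟩, ht'⟩
        have : C = (g : G ⧸ H) := by
          rw [← fmem C]; exact (QuotientGroup.eq).mpr ht'
        rw [this]
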